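/- For any density matrix ρ on an N-dimensional Hilbert space, any unitary U, any partition of unity X, and any time t, the cumulative AFL entropy satisfies H_AFL(ρ, U, X, t) ≤ S(ρ) + log N ≤ 2 log N, where S denotes von Neumann entropy. -/

import Mathlib

open scoped BigOperators ComplexOrder
open Matrix Kronecker

namespace AFL

variable {n : Type*} [Fintype n] [DecidableEq n]

/-- von Neumann entropy of a (Hermitian) matrix, via its eigenvalues. -/
noncomputable def vNEntropy (ρ : Matrix n n ℂ) : ℝ :=
  if h : ρ.IsHermitian then -∑ i, h.eigenvalues i * Real.log (h.eigenvalues i) else 0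

/-- A density matrix: positive semidefinite (hence Hermitian) with unit trace. -/
def IsDensity (ρ : Matrix n n ℂ) : Prop := ρ.PosSemidef ∧ ρ.trace = 1

/-- An operational partition of unity (Kraus operators of a channel). -/
def IsPartition {K : Type*} [Fintype K] (X : K → Matrix n n ℂ) : Prop :=
  ∑ i, (X i)ᴴ * X i = 1

/-- The entropy-exchange (environment) state ρ̃[X]_{ij} = Tr(Xⁱ ρ Xʲ†). -/
noncomputable def envState {K : Type*} [Fintype K] (X : K → Matrix n n ℂ)
    (ρ : Matrix n n ℂ) : Matrix K K ℂ :=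
  Matrix.of fun i j => (X i * ρ * (X j)ᴴ).trace

/-- Multitime Kraus operator U X^{i_t} ⋯ U X^{i_1} of the t-step evolved partition (UX)^t. -/
noncomputable def multiKraus {K : Type*} (U : Matrix n n ℂ) (X : K → Matrix n n ℂ)
    (t : ℕ) (idx : Fin t → K) : Matrix n n ℂ :=
  (List.ofFn fun k => U * X (idx k)).prod

/-- Cumulative AFL entropy: von Neumann entropy of the environment state after t steps. -/
noncomputable def HAFL {K : Type*} [Fintype K] [DecidableEq K]
    (ρ U : Matrix n n ℂ) (X : K → Matrix n n ℂ) (t : ℕ) : ℝ :=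
  vNEntropy (envState (multiKraus U X t) ρ)

/-- Shannon entropy of a probability vector. -/
noncomputable def shannon {ι : Type*} [Fintype ι] (p : ι → ℝ) : ℝ :=
  -∑ i, p i * Real.log (p i)

end AFL


section Aux

open Matrix

private noncomputable abbrev ent := Real.negMulLog

private lemma jensen_sub {ι : Type*} [Fintype ι] (w x : ι → ℝ) (hw : ∀ i, 0 ≤ w i)
    (hw1 : ∑ i, w i ≤ 1) (hx : ∀ i, 0 ≤ x i) :
    ∑ i, w i * ent (x i) ≤ ent (∑ i, w i * x i) := by
  classical
  set w' : Option ι → ℝ := fun o => o.elim (1 - ∑ i, w i) w with hw'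
  set x' : Option ι → ℝ := fun o => o.elim 0 x with hx'
  have h₀ : ∀ o ∈ (Finset.univ : Finset (Option ι)), 0 ≤ w' o := by
    rintro (_|i) _
    · simpa [w'] using hw1
    · exact hw i
  have h₁ : ∑ o, w' o = 1 := by
    simp [w', Fintype.sum_option]
  have hmem : ∀ o ∈ (Finset.univ : Finset (Option ι)), x' o ∈ Set.Ici (0:ℝ) := by
    rintro (_|i) _
    · simp [x']
    · exact hx i
  have := Real.concaveOn_negMulLog.le_map_sum h₀ h₁ hmem
  simpa [Fintype.sum_option, w', x', smul_eq_mul] using this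

private lemma shannon_le_log {ι : Type*} [Fintype ι] (w : ι → ℝ) (hw : ∀ i, 0 ≤ w i)
    (hw1 : ∑ i, w i = 1) : ∑ i, ent (w i) ≤ Real.log (Fintype.card ι) := by
  classical
  have hne : Nonempty ι := by
    by_contra h
    rw [not_nonempty_iff] at h
    simp [Finset.univ_eq_empty] at hw1
  have hN : (0:ℝ) < Fintype.card ι := by positivity
  have := jensen_sub (fun _ : ι => (Fintype.card ι : ℝ)⁻¹) w (by intro i; positivity)
    (by simp [Finset.card_univ]) hw
  have h2 : ∑ i, (Fintype.card ι : ℝ)⁻¹ * w i = (Fintype.card ι : ℝ)⁻¹ := by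
    rw [← Finset.mul_sum, hw1, mul_one]
  rw [h2] at this
  have h3 : ent ((Fintype.card ι : ℝ)⁻¹) = (Fintype.card ι : ℝ)⁻¹ * Real.log (Fintype.card ι) := by
    simp [Real.negMulLog, Real.log_inv]
  rw [h3, ← Finset.mul_sum] at this
  exact le_of_mul_le_mul_left this (inv_pos.mpr hN)

private lemma proj_diag_le_one {κ : Type*} [Fintype κ] (P : Matrix κ κ ℂ)
    (hH : Pᴴ = P) (hI : P * P = P) (α : κ) : (P α α).re ≤ 1 := by
  classical
  have hsym : ∀ β, P β α = (starRingEnd ℂ) (P α β) := by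
    intro β
    have := congrFun (congrFun hH α) β
    rw [conjTranspose_apply] at this
    rw [← this]; simp
  have h1 : P α α = ((∑ β, Complex.normSq (P α β) : ℝ) : ℂ) := by
    conv_lhs => rw [← hI]
    rw [mul_apply]
    push_cast
    refine Finset.sum_congr rfl fun β _ => ?_
    rw [hsym β, Complex.mul_conj]
  set s : ℝ := ∑ β, Complex.normSq (P α β) with hs
  have hre : (P α α).re = s := by rw [h1]; simp
  have hterm : Complex.normSq (P α α) ≤ s :=
    Finset.single_le_sum (fun β _ => Complex.normSq_nonneg _) (Finset.mem_univ α)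
  have hPαα : Complex.normSq (P α α) = s * s := by
    rw [h1, Complex.normSq_ofReal]
  have hs0 : 0 ≤ s := Finset.sum_nonneg fun β _ => Complex.normSq_nonneg _
  rw [hre]
  nlinarith [hterm, hPαα]

private lemma entropy_gram_le {κ ι : Type*} [Fintype κ] [Fintype ι] [DecidableEq ι]
    (M : Matrix κ ι ℂ) :
    AFL.vNEntropy (Mᴴ * M) ≤ ∑ α, ent (∑ i, Complex.normSq (M α i)) := by
  classical
  have hPSD : (Mᴴ * M).PosSemidef := Matrix.posSemidef_conjTranspose_mul_self M
  have hH : (Mᴴ * M).IsHermitian := hPSD.isHermitian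
  set r : ι → ℝ := hH.eigenvalues with hrdef
  have hr0 : ∀ k, 0 ≤ r k := hPSD.eigenvalues_nonneg
  set W : Matrix ι ι ℂ := (hH.eigenvectorUnitary : Matrix ι ι ℂ) with hW
  set B : Matrix κ ι ℂ := M * W with hB
  have hBB : Bᴴ * B = diagonal (fun k => ((r k : ℝ) : ℂ)) := by
    rw [hB, conjTranspose_mul]
    calc Wᴴ * Mᴴ * (M * W) = star W * (Mᴴ * M) * W := by
          rw [Matrix.star_eq_conjTranspose]; simp only [Matrix.mul_assoc]
      _ = diagonal (fun k => ((r k : ℝ) : ℂ)) := by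
          have h := hH.conjStarAlgAut_star_eigenvectorUnitary
          rw [Unitary.conjStarAlgAut_star_apply] at h
          exact h
  have hWW : W * Wᴴ = 1 := by
    rw [← Matrix.star_eq_conjTranspose]
    exact (Matrix.mem_unitaryGroup_iff).mp hH.eigenvectorUnitary.2
  set c : κ → ι → ℝ := fun α k => Complex.normSq (B α k) with hc
  have hBBe : ∀ k l, ∑ α, (starRingEnd ℂ) (B α k) * B α l
      = if k = l then ((r k : ℝ) : ℂ) else 0 := by
    intro k l
    have := congrFun (congrFun hBB k) l
    rw [mul_apply] at this
    simp only [conjTranspose_apply, diagonal_apply] at this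
    convert this using 2
    rfl
  have hcol : ∀ k, ∑ α, c α k = r k := by
    intro k
    have h := hBBe k k
    rw [if_pos rfl] at h
    have : ((∑ α, c α k : ℝ) : ℂ) = ((r k : ℝ) : ℂ) := by
      rw [← h]
      push_cast
      refine Finset.sum_congr rfl fun α _ => ?_
      rw [mul_comm, Complex.mul_conj]
    exact_mod_cast this
  have hMMBB : M * Mᴴ = B * Bᴴ := by
    rw [hB, conjTranspose_mul, ← Matrix.mul_assoc, Matrix.mul_assoc M W, hWW,
      Matrix.mul_one]
  have hrow : ∀ α, ∑ i, Complex.normSq (M α i) = ∑ k, c α k := by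
    intro α
    have h := congrFun (congrFun hMMBB α) α
    rw [mul_apply, mul_apply] at h
    simp only [conjTranspose_apply] at h
    have h2 : ((∑ i, Complex.normSq (M α i) : ℝ) : ℂ) = ((∑ k, c α k : ℝ) : ℂ) := by
      push_cast
      calc (∑ i, (Complex.normSq (M α i) : ℂ)) = ∑ i, M α i * (starRingEnd ℂ) (M α i) := by
            refine Finset.sum_congr rfl fun i _ => (Complex.mul_conj _).symm
        _ = ∑ k, B α k * (starRingEnd ℂ) (B α k) := h
        _ = ∑ k, (Complex.normSq (B α k) : ℂ) := by
            refine Finset.sum_congr rfl fun k _ => Complex.mul_conj _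
    exact_mod_cast h2
  set C : Matrix κ ι ℂ := Matrix.of
    (fun α k => if r k = 0 then 0 else ((Real.sqrt (r k) : ℝ) : ℂ)⁻¹ * B α k) with hCdef
  have hsq : ∀ k, r k ≠ 0 → ((Real.sqrt (r k) : ℝ) : ℂ) * ((Real.sqrt (r k) : ℝ) : ℂ)
      = ((r k : ℝ) : ℂ) := by
    intro k hk
    rw [← Complex.ofReal_mul, Real.mul_self_sqrt (hr0 k)]
  have hCC : Cᴴ * C = diagonal (fun k => if r k = 0 then (0:ℂ) else 1) := by
    ext k l
    rw [mul_apply]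
    simp only [conjTranspose_apply, hCdef, Matrix.of_apply, diagonal_apply]
    by_cases hk : r k = 0
    · simp only [if_pos hk, star_zero, zero_mul, Finset.sum_const_zero]
      by_cases hkl : k = l
      · subst hkl; simp [hk]
      · simp [hkl]
    by_cases hl : r l = 0
    · simp only [if_pos hl, mul_zero, Finset.sum_const_zero]
      have hkl : k ≠ l := fun h => hk (h ▸ hl)
      simp [hkl]
    simp only [if_neg hk, if_neg hl]
    have key : ∀ α : κ, star (((Real.sqrt (r k) : ℝ) : ℂ)⁻¹ * B α k)
        * (((Real.sqrt (r l) : ℝ) : ℂ)⁻¹ * B α l)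
        = ((Real.sqrt (r k) : ℝ) : ℂ)⁻¹ * ((Real.sqrt (r l) : ℝ) : ℂ)⁻¹
          * ((starRingEnd ℂ) (B α k) * B α l) := by
      intro α
      simp only [star_mul', star_inv₀, Complex.star_def, Complex.conj_ofReal]
      ring
    rw [Finset.sum_congr rfl (fun α _ => key α), ← Finset.mul_sum, hBBe k l]
    by_cases hkl : k = l
    · subst hkl
      rw [if_pos rfl, if_pos rfl]
      have hpos : (0:ℝ) < Real.sqrt (r k) :=
        Real.sqrt_pos.mpr (lt_of_le_of_ne (hr0 k) (Ne.symm hk))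
      have hne : ((Real.sqrt (r k) : ℝ) : ℂ) ≠ 0 := by
        exact_mod_cast Complex.ofReal_ne_zero.mpr hpos.ne'
      field_simp
      rw [pow_two]
      exact (hsq k hk).symm
    · simp [hkl]
  have hCD : C * diagonal (fun k => if r k = 0 then (0:ℂ) else 1) = C := by
    ext α k
    rw [mul_diagonal]
    simp only [hCdef, Matrix.of_apply]
    by_cases hk : r k = 0 <;> simp [hk]
  set P : Matrix κ κ ℂ := C * Cᴴ with hP
  have hPH : Pᴴ = P := by rw [hP, conjTranspose_mul, conjTranspose_conjTranspose]
  have hPI : P * P = P := by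
    rw [hP, Matrix.mul_assoc, ← Matrix.mul_assoc Cᴴ C Cᴴ, hCC, ← Matrix.mul_assoc, hCD]
  set Pr : κ → ι → ℝ := fun α k => if r k = 0 then 0 else c α k / r k with hPrdef
  have hCnorm : ∀ α k, Complex.normSq (C α k) = Pr α k := by
    intro α k
    simp only [hCdef, Matrix.of_apply, hPrdef]
    by_cases hk : r k = 0
    · simp [hk]
    · rw [if_neg hk, if_neg hk, Complex.normSq_mul, ← Complex.ofReal_inv,
        Complex.normSq_ofReal]
      rw [← Real.sqrt_inv, Real.mul_self_sqrt (inv_nonneg.mpr (hr0 k))]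
      rw [div_eq_mul_inv]
      ring
  have hbessel : ∀ α, ∑ k, Pr α k ≤ 1 := by
    intro α
    have hle := proj_diag_le_one P hPH hPI α
    have hPαα : P α α = ((∑ k, Pr α k : ℝ) : ℂ) := by
      rw [hP, mul_apply]
      push_cast
      simp only [conjTranspose_apply]
      refine Finset.sum_congr rfl fun k _ => ?_
      rw [show star (C α k) = (starRingEnd ℂ) (C α k) from rfl, Complex.mul_conj, hCnorm]
    rw [hPαα] at hle
    simpa using hle
  have hczero : ∀ α k, r k = 0 → c α k = 0 := by
    intro α k hk
    have := hcol k
    rw [hk] at this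
    have hall := (Finset.sum_eq_zero_iff_of_nonneg
      (fun β _ => Complex.normSq_nonneg (B β k))).mp this
    exact hall α (Finset.mem_univ α)
  have hPr0 : ∀ α k, 0 ≤ Pr α k := by
    intro α k
    simp only [hPrdef]
    by_cases hk : r k = 0
    · simp [hk]
    · rw [if_neg hk]; exact div_nonneg (Complex.normSq_nonneg _) (hr0 k)
  have hPrr : ∀ α, ∑ k, Pr α k * r k = ∑ k, c α k := by
    intro α
    refine Finset.sum_congr rfl fun k _ => ?_
    simp only [hPrdef]
    by_cases hk : r k = 0
    · simp [hk, hczero α k hk]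
    · rw [if_neg hk, div_mul_cancel₀ _ hk]
  have hent : AFL.vNEntropy (Mᴴ * M) = ∑ k, ent (r k) := by
    rw [AFL.vNEntropy, dif_pos hH]
    simp only [Real.negMulLog, neg_mul]
    rw [← Finset.sum_neg_distrib]
  rw [hent]
  calc ∑ k, ent (r k) = ∑ k, (∑ α, Pr α k) * ent (r k) := by
        refine Finset.sum_congr rfl fun k _ => ?_
        by_cases hk : r k = 0
        · simp [hk]
        · have : ∑ α, Pr α k = 1 := by
            simp only [hPrdef, if_neg hk]
            rw [← Finset.sum_div, hcol k, div_self hk]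
          rw [this, one_mul]
    _ = ∑ α, ∑ k, Pr α k * ent (r k) := by
        rw [Finset.sum_comm]
        exact Finset.sum_congr rfl fun k _ => by rw [Finset.sum_mul]
    _ ≤ ∑ α, ent (∑ k, Pr α k * r k) := by
        refine Finset.sum_le_sum fun α _ => ?_
        exact jensen_sub (Pr α) r (hPr0 α) (hbessel α) hr0
    _ = ∑ α, ent (∑ i, Complex.normSq (M α i)) := by
        refine Finset.sum_congr rfl fun α _ => ?_
        rw [hPrr α, ← hrow α]

private lemma multiKraus_cons {n K : Type*} [Fintype n] [DecidableEq n]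
    (U : Matrix n n ℂ) (X : K → Matrix n n ℂ) (t : ℕ) (k : K) (f : Fin t → K) :
    AFL.multiKraus U X (t+1) (Fin.cons k f) = (U * X k) * AFL.multiKraus U X t f := by
  rw [AFL.multiKraus, AFL.multiKraus, List.ofFn_succ]
  simp [Fin.cons_succ]

private lemma multiKraus_partition {n K : Type*} [Fintype n] [DecidableEq n] [Fintype K]
    (U : Matrix n n ℂ) (hU : U ∈ Matrix.unitaryGroup n ℂ)
    (X : K → Matrix n n ℂ) (hX : AFL.IsPartition X) (t : ℕ) :
    ∑ idx : Fin t → K, (AFL.multiKraus U X t idx)ᴴ * AFL.multiKraus U X t idx = 1 := by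
  classical
  have hUU : Uᴴ * U = 1 := by
    rw [← Matrix.star_eq_conjTranspose]
    exact (Matrix.mem_unitaryGroup_iff').mp hU
  induction t with
  | zero =>
    rw [Fintype.sum_unique]
    simp [AFL.multiKraus]
  | succ t ih =>
    rw [← (Fin.consEquiv (fun _ : Fin (t+1) => K)).sum_comp]
    rw [Fintype.sum_prod_type]
    have step : ∀ (k : K) (f : Fin t → K),
        (AFL.multiKraus U X (t+1) ((Fin.consEquiv _) (k, f)))ᴴ
          * AFL.multiKraus U X (t+1) ((Fin.consEquiv _) (k, f))
        = (AFL.multiKraus U X t f)ᴴ * ((X k)ᴴ * X k) * AFL.multiKraus U X t f := by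
      intro k f
      have : (Fin.consEquiv (fun _ : Fin (t+1) => K)) (k, f) = Fin.cons k f := rfl
      rw [this, multiKraus_cons]
      rw [conjTranspose_mul, conjTranspose_mul]
      simp only [Matrix.mul_assoc]
      rw [← Matrix.mul_assoc Uᴴ U, hUU, Matrix.one_mul]
    simp only [step]
    rw [Finset.sum_comm]
    have h2 : ∀ f : Fin t → K, ∑ k, (AFL.multiKraus U X t f)ᴴ * ((X k)ᴴ * X k)
        * AFL.multiKraus U X t f = (AFL.multiKraus U X t f)ᴴ * AFL.multiKraus U X t f := by
      intro f
      rw [← Finset.sum_mul, ← Finset.mul_sum, hX, Matrix.mul_one]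
    rw [Finset.sum_congr rfl (fun f _ => h2 f)]
    exact ih

end Aux

/-- H_AFL(ρ,U,X,t) ≤ S(ρ) + log N ≤ 2 log N (system-purifier bound). -/
theorem stmt4 {n K : Type*} [Fintype n] [DecidableEq n] [Fintype K] [DecidableEq K]
    (ρ : Matrix n n ℂ) (hρ : AFL.IsDensity ρ)
    (U : Matrix n n ℂ) (hU : U ∈ Matrix.unitaryGroup n ℂ)
    (X : K → Matrix n n ℂ) (hX : AFL.IsPartition X) (t : ℕ) :
    AFL.HAFL ρ U X t ≤ AFL.vNEntropy ρ + Real.log (Fintype.card n) ∧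
    AFL.vNEntropy ρ + Real.log (Fintype.card n) ≤ 2 * Real.log (Fintype.card n) := by
  classical
  obtain ⟨hPSD, htr⟩ := hρ
  have hHρ : ρ.IsHermitian := hPSD.isHermitian
  set p : n → ℝ := hHρ.eigenvalues with hpdef
  have hp0 : ∀ a, 0 ≤ p a := hPSD.eigenvalues_nonneg
  set V : Matrix n n ℂ := (hHρ.eigenvectorUnitary : Matrix n n ℂ) with hV
  have hVV : star V * V = 1 := (Matrix.mem_unitaryGroup_iff').mp hHρ.eigenvectorUnitary.2
  have hspec : ρ = V * Matrix.diagonal (fun a => ((p a : ℝ) : ℂ)) * star V := by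
    have := hHρ.spectral_theorem
    rw [Unitary.conjStarAlgAut_apply] at this
    exact this
  have hsum_p : ∑ a, p a = 1 := by
    have h1 : ρ.trace = ∑ a, ((p a : ℝ) : ℂ) := by
      conv_lhs => rw [hspec]
      rw [Matrix.trace_mul_cycle, hVV, Matrix.one_mul, Matrix.trace_diagonal]
    rw [htr] at h1
    have : ((∑ a, p a : ℝ) : ℂ) = ((1 : ℝ) : ℂ) := by push_cast; rw [← h1]
    exact_mod_cast this
  have hSρ : AFL.vNEntropy ρ = ∑ a, ent (p a) := by
    rw [AFL.vNEntropy, dif_pos hHρ]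
    simp only [Real.negMulLog, neg_mul]
    rw [← Finset.sum_neg_distrib]
  have hSle : AFL.vNEntropy ρ ≤ Real.log (Fintype.card n) := by
    rw [hSρ]
    exact shannon_le_log p hp0 hsum_p
  refine ⟨?_, by linarith⟩
  -- Part 1
  set Y : (Fin t → K) → Matrix n n ℂ := AFL.multiKraus U X t with hY
  have hpart : ∑ i, (Y i)ᴴ * Y i = 1 := multiKraus_partition U hU X hX t
  set R : Matrix n n ℂ := V * Matrix.diagonal (fun a => ((Real.sqrt (p a) : ℝ) : ℂ)) with hR
  have hRR : R * Rᴴ = ρ := by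
    rw [hR, conjTranspose_mul, diagonal_conjTranspose]
    have hstar : star (fun a => ((Real.sqrt (p a) : ℝ) : ℂ))
        = fun a => ((Real.sqrt (p a) : ℝ) : ℂ) := by
      funext a; simp [Complex.star_def, Complex.conj_ofReal]
    rw [hstar, Matrix.mul_assoc, ← Matrix.mul_assoc (Matrix.diagonal _),
      Matrix.diagonal_mul_diagonal]
    have hdd : (fun a => ((Real.sqrt (p a) : ℝ) : ℂ) * ((Real.sqrt (p a) : ℝ) : ℂ))
        = fun a => ((p a : ℝ) : ℂ) := by
      funext a
      rw [← Complex.ofReal_mul, Real.mul_self_sqrt (hp0 a)]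
    rw [hdd, ← Matrix.star_eq_conjTranspose, ← Matrix.mul_assoc, ← hspec]
  set M : Matrix (n × n) (Fin t → K) ℂ :=
    Matrix.of (fun ba i => (starRingEnd ℂ) ((Y i * R) ba.1 ba.2)) with hM
  have hEnv : Mᴴ * M = AFL.envState Y ρ := by
    ext i j
    rw [mul_apply]
    simp only [conjTranspose_apply, hM, Matrix.of_apply, AFL.envState]
    have hterm : ∀ ba : n × n,
        star ((starRingEnd ℂ) ((Y i * R) ba.1 ba.2)) * (starRingEnd ℂ) ((Y j * R) ba.1 ba.2)
        = (Y i * R) ba.1 ba.2 * (starRingEnd ℂ) ((Y j * R) ba.1 ba.2) := by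
      intro ba; simp
    rw [Finset.sum_congr rfl (fun ba _ => hterm ba)]
    have hre : Y i * ρ * (Y j)ᴴ = (Y i * R) * (Y j * R)ᴴ := by
      rw [conjTranspose_mul, ← hRR]
      simp only [Matrix.mul_assoc]
    rw [hre, Matrix.trace]
    simp only [Matrix.diag_apply, mul_apply, conjTranspose_apply]
    rw [Fintype.sum_prod_type]
    rfl
  set q : n → n → ℝ := fun a b => ∑ i, Complex.normSq ((Y i * V) b a) with hqdef
  have hq0 : ∀ a b, 0 ≤ q a b := fun a b =>
    Finset.sum_nonneg fun i _ => Complex.normSq_nonneg _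
  have hd : ∀ ba : n × n, ∑ i, Complex.normSq (M ba i) = p ba.2 * q ba.2 ba.1 := by
    intro ba
    rw [hqdef, Finset.mul_sum]
    refine Finset.sum_congr rfl fun i _ => ?_
    have h1 : M ba i = (starRingEnd ℂ) ((Y i * R) ba.1 ba.2) := rfl
    rw [h1, Complex.normSq_conj]
    have h2 : (Y i * R) ba.1 ba.2 = (Y i * V) ba.1 ba.2 * ((Real.sqrt (p ba.2) : ℝ) : ℂ) := by
      rw [hR, ← Matrix.mul_assoc, mul_diagonal]
    rw [h2, Complex.normSq_mul, Complex.normSq_ofReal, Real.mul_self_sqrt (hp0 ba.2)]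
    ring
  have hq1 : ∀ a, ∑ b, q a b = 1 := by
    intro a
    have hsum : ∑ i, (Y i * V)ᴴ * (Y i * V) = 1 := by
      have : ∀ i : Fin t → K, (Y i * V)ᴴ * (Y i * V) = Vᴴ * ((Y i)ᴴ * Y i) * V := by
        intro i
        rw [conjTranspose_mul]
        simp only [Matrix.mul_assoc]
      rw [Finset.sum_congr rfl (fun i _ => this i), ← Finset.sum_mul, ← Finset.mul_sum,
        hpart, Matrix.mul_one, ← Matrix.star_eq_conjTranspose, hVV]
    have h1 : ((∑ b, q a b : ℝ) : ℂ) = ((1 : ℝ) : ℂ) := by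
      push_cast
      calc ∑ b, (q a b : ℂ) = ∑ b, ∑ i, ((Complex.normSq ((Y i * V) b a) : ℝ) : ℂ) := by
            refine Finset.sum_congr rfl fun b _ => ?_
            rw [hqdef]; push_cast; rfl
        _ = ∑ i, ∑ b, (starRingEnd ℂ) ((Y i * V) b a) * (Y i * V) b a := by
            rw [Finset.sum_comm]
            refine Finset.sum_congr rfl fun i _ => Finset.sum_congr rfl fun b _ => ?_
            rw [mul_comm, Complex.mul_conj]
        _ = ∑ i, ((Y i * V)ᴴ * (Y i * V)) a a := by
            refine Finset.sum_congr rfl fun i _ => ?_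
            rw [mul_apply]
            refine Finset.sum_congr rfl fun b _ => ?_
            rw [conjTranspose_apply]
            rfl
        _ = ((1 : Matrix n n ℂ)) a a := by
            rw [← hsum, Matrix.sum_apply]
        _ = 1 := by rw [Matrix.one_apply_eq]
    exact_mod_cast h1
  have hbound := entropy_gram_le M
  rw [hEnv] at hbound
  have hfinal : ∑ ba : n × n, ent (∑ i, Complex.normSq (M ba i))
      ≤ AFL.vNEntropy ρ + Real.log (Fintype.card n) := by
    calc ∑ ba : n × n, ent (∑ i, Complex.normSq (M ba i))
        = ∑ ba : n × n, ent (p ba.2 * q ba.2 ba.1) := by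
          exact Finset.sum_congr rfl fun ba _ => by rw [hd ba]
      _ = ∑ b, ∑ a, ent (p a * q a b) := by rw [Fintype.sum_prod_type]
      _ = ∑ a, ∑ b, ent (p a * q a b) := Finset.sum_comm
      _ = ∑ a, (ent (p a) + p a * ∑ b, ent (q a b)) := by
          refine Finset.sum_congr rfl fun a _ => ?_
          rw [Finset.mul_sum]
          have : ∀ b, ent (p a * q a b) = q a b * ent (p a) + p a * ent (q a b) :=
            fun b => Real.negMulLog_mul _ _
          rw [Finset.sum_congr rfl (fun b _ => this b), Finset.sum_add_distrib,
            ← Finset.sum_mul, hq1 a, one_mul]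
      _ ≤ ∑ a, (ent (p a) + p a * Real.log (Fintype.card n)) := by
          refine Finset.sum_le_sum fun a _ => ?_
          have := shannon_le_log (q a) (hq0 a) (hq1 a)
          nlinarith [hp0 a, this]
      _ = AFL.vNEntropy ρ + Real.log (Fintype.card n) := by
          rw [Finset.sum_add_distrib, ← Finset.sum_mul, hsum_p, one_mul, hSρ]
  calc AFL.HAFL ρ U X t = AFL.vNEntropy (AFL.envState Y ρ) := rfl
    _ ≤ ∑ ba : n × n, ent (∑ i, Complex.normSq (M ba i)) := hbound
    _ ≤ AFL.vNEntropy ρ + Real.log (Fintype.card n) := hfinal
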